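/- arXiv:0902.4197 — 8 statements merged into one kernel-verified Lean document; each statement's English description precedes it below -/
import Mathlib

section
/- Let (T, C, ψ) be a weak entwining structure on a category 𝒞. Then for every object A of 𝒞 the following equality of morphisms T T C A → C T A holds: C(ε_{T A}) ∘ C(ψ_A) ∘ C(μ_{C A}) ∘ ψ_{T C A} ∘ T(ψ_{C A}) ∘ T T(δ_A) = ψ_A ∘ μ_{C A}. (This says that the multiplication μ of T is a 2-cell (t,ψ)(t,ψ) ⇒ (t,ψ) in the extended 2-category Cmd^π of comonads.) -/
open CategoryTheory

/-- A weak entwining structure on a category `𝒞`, consisting of a monad `T`, a comonad `G`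
and a natural transformation `ψ : T ∘ G ⟶ G ∘ T` satisfying the four weak entwining axioms
of Caenepeel and De Groot. -/
structure WeakEntwining {𝒞 : Type*} [Category 𝒞] (T : Monad 𝒞) (G : Comonad 𝒞) where
  /-- the entwining natural transformation, with components `T (G A) ⟶ G (T A)` -/
  ψ : (G.toFunctor ⋙ T.toFunctor : 𝒞 ⥤ 𝒞) ⟶ (T.toFunctor ⋙ G.toFunctor : 𝒞 ⥤ 𝒞)
  /-- (W1) `ψ_A ∘ μ_{C A} = C(μ_A) ∘ ψ_{T A} ∘ T(ψ_A)` -/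
  w1 : ∀ A : 𝒞, T.μ.app (G.obj A) ≫ ψ.app A =
      T.map (ψ.app A) ≫ ψ.app (T.obj A) ≫ G.map (T.μ.app A)
  /-- (W2) `δ_{T A} ∘ ψ_A = C(ψ_A) ∘ ψ_{C A} ∘ T(δ_A)` -/
  w2 : ∀ A : 𝒞, ψ.app A ≫ G.δ.app (T.obj A) =
      T.map (G.δ.app A) ≫ ψ.app (G.obj A) ≫ G.map (ψ.app A)
  /-- (W3) `ψ_A ∘ η_{C A} = C(ε_{T A}) ∘ C(ψ_A) ∘ C(η_{C A}) ∘ δ_A` -/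
  w3 : ∀ A : 𝒞, T.η.app (G.obj A) ≫ ψ.app A =
      G.δ.app A ≫ G.map (T.η.app (G.obj A)) ≫ G.map (ψ.app A) ≫ G.map (G.ε.app (T.obj A))
  /-- (W4) `ε_{T A} ∘ ψ_A = μ_A ∘ T(ε_{T A}) ∘ T(ψ_A) ∘ T(η_{C A})` -/
  w4 : ∀ A : 𝒞, ψ.app A ≫ G.ε.app (T.obj A) =
      T.map (T.η.app (G.obj A)) ≫ T.map (ψ.app A) ≫ T.map (G.ε.app (T.obj A)) ≫ T.μ.app A

/-- For a weak entwining structure, the multiplication `μ` of the monad is a 2-cell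
`(t,ψ)(t,ψ) ⇒ (t,ψ)` in the extended 2-category `Cmd^π` of comonads: for every object `A`,
`C(ε_{T A}) ∘ C(ψ_A) ∘ C(μ_{C A}) ∘ ψ_{T C A} ∘ T(ψ_{C A}) ∘ T T(δ_A) = ψ_A ∘ μ_{C A}`
as morphisms `T T C A ⟶ C T A`. -/
theorem weakEntwining_mul_two_cell {𝒞 : Type*} [Category 𝒞] (T : Monad 𝒞) (G : Comonad 𝒞)
    (w : WeakEntwining T G) (A : 𝒞) :
    T.map (T.map (G.δ.app A)) ≫ T.map (w.ψ.app (G.obj A)) ≫ w.ψ.app (T.obj (G.obj A)) ≫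
        G.map (T.μ.app (G.obj A)) ≫ G.map (w.ψ.app A) ≫ G.map (G.ε.app (T.obj A)) =
      T.μ.app (G.obj A) ≫ w.ψ.app A := by
  have natψ : T.map (G.map (w.ψ.app A)) ≫ w.ψ.app (G.obj (T.obj A)) =
      w.ψ.app (T.obj (G.obj A)) ≫ G.map (T.map (w.ψ.app A)) := w.ψ.naturality (w.ψ.app A)
  have natδ : G.map (T.μ.app A) ≫ G.δ.app (T.obj A) =
      G.δ.app (T.obj (T.obj A)) ≫ G.map (G.map (T.μ.app A)) := G.δ.naturality (T.μ.app A)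
  slice_lhs 4 5 => rw [← G.map_comp, w.w1 A, G.map_comp, G.map_comp]
  slice_lhs 3 4 => rw [← natψ]
  slice_lhs 1 3 => rw [← T.map_comp, ← T.map_comp, ← w.w2 A, T.map_comp]
  slice_lhs 2 4 => rw [← w.w2 (T.obj A)]
  slice_lhs 3 4 => rw [← natδ]
  slice_lhs 4 5 => rw [Comonad.right_counit]
  simp [← w.w1 A]
end

section
/- Let (T, C, ψ) be a weak entwining structure on a category 𝒞. Then for every object A of 𝒞 the following equality of morphisms T C A → C C T A holds: C C(μ_A) ∘ C(ψ_{T A}) ∘ ψ_{C T A} ∘ T(δ_{T A}) ∘ T(ψ_A) ∘ T(η_{C A}) = δ_{T A} ∘ ψ_A. (This says that the comultiplication δ of C is a 2-cell (c,ψ) ⇒ (c,ψ)(c,ψ) in the extended 2-category Mnd^ι of monads.) -/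
open CategoryTheory

/-- For a weak entwining structure, the comultiplication `δ` of the comonad is a 2-cell
`(c,ψ) ⇒ (c,ψ)(c,ψ)` in the extended 2-category `Mnd^ι` of monads: for every object `A`,
`C C(μ_A) ∘ C(ψ_{T A}) ∘ ψ_{C T A} ∘ T(δ_{T A}) ∘ T(ψ_A) ∘ T(η_{C A}) = δ_{T A} ∘ ψ_A`
as morphisms `T C A ⟶ C C T A`. -/
theorem weakEntwining_comul_two_cell {𝒞 : Type*} [Category 𝒞] (T : Monad 𝒞) (G : Comonad 𝒞)
    (w : WeakEntwining T G) (A : 𝒞) :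
    T.map (T.η.app (G.obj A)) ≫ T.map (w.ψ.app A) ≫ T.map (G.δ.app (T.obj A)) ≫
        w.ψ.app (G.obj (T.obj A)) ≫ G.map (w.ψ.app (T.obj A)) ≫ G.map (G.map (T.μ.app A)) =
      w.ψ.app A ≫ G.δ.app (T.obj A) := by
  have h2 := w.w2 (T.obj A)
  have h1 := w.w1 A
  have hnat := G.δ.naturality (T.μ.app A)
  calc T.map (T.η.app (G.obj A)) ≫ T.map (w.ψ.app A) ≫ T.map (G.δ.app (T.obj A)) ≫
        w.ψ.app (G.obj (T.obj A)) ≫ G.map (w.ψ.app (T.obj A)) ≫ G.map (G.map (T.μ.app A))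
      = T.map (T.η.app (G.obj A)) ≫ T.map (w.ψ.app A) ≫ (w.ψ.app (T.obj A) ≫
        G.δ.app (T.obj (T.obj A))) ≫ G.map (G.map (T.μ.app A)) := by
        rw [h2]; simp only [Category.assoc]
    _ = T.map (T.η.app (G.obj A)) ≫ T.map (w.ψ.app A) ≫ w.ψ.app (T.obj A) ≫
        G.map (T.μ.app A) ≫ G.δ.app (T.obj A) := by
        simp only [Category.assoc]
        rw [show G.δ.app (T.obj (T.obj A)) ≫ G.map (G.map (T.μ.app A)) =
          G.map (T.μ.app A) ≫ G.δ.app (T.obj A) from hnat.symm]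
    _ = (T.map (T.η.app (G.obj A)) ≫ T.μ.app (G.obj A)) ≫ w.ψ.app A ≫ G.δ.app (T.obj A) := by
        slice_lhs 2 4 => rw [← h1]
        simp only [Category.assoc]
    _ = w.ψ.app A ≫ G.δ.app (T.obj A) := by
        rw [T.right_unit]; simp
end

section
/- Let (T, C, ψ) be a weak entwining structure on a category 𝒞. For every object A of 𝒞 define e_A := C(μ_A) ∘ ψ_{T A} ∘ η_{C T A} : C T A → C T A. Then e_A is idempotent: e_A ∘ e_A = e_A. (These are the components of the canonical idempotent 2-cell associated to the 1-cell (c,ψ) : t → t of Mnd^ι, at free T-algebras.) -/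
open CategoryTheory

/-- The canonical endomorphism `e_A := C(μ_A) ∘ ψ_{T A} ∘ η_{C T A}` of `C T A` is
idempotent: `e_A ∘ e_A = e_A`. -/
theorem weakEntwining_canonical_idempotent {𝒞 : Type*} [Category 𝒞] (T : Monad 𝒞)
    (G : Comonad 𝒞) (w : WeakEntwining T G) (A : 𝒞) :
    (T.η.app (G.obj (T.obj A)) ≫ w.ψ.app (T.obj A) ≫ G.map (T.μ.app A)) ≫
        (T.η.app (G.obj (T.obj A)) ≫ w.ψ.app (T.obj A) ≫ G.map (T.μ.app A)) =
      T.η.app (G.obj (T.obj A)) ≫ w.ψ.app (T.obj A) ≫ G.map (T.μ.app A) := by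

  have n1 : G.map (T.μ.app A) ≫ T.η.app (G.obj (T.obj A)) =
      T.η.app (G.obj (T.obj (T.obj A))) ≫ T.map (G.map (T.μ.app A)) := by
    simpa using T.η.naturality (G.map (T.μ.app A))
  have n2 : w.ψ.app (T.obj A) ≫ T.η.app (G.obj (T.obj (T.obj A))) =
      T.η.app (T.obj (G.obj (T.obj A))) ≫ T.map (w.ψ.app (T.obj A)) := by
    simpa using T.η.naturality (w.ψ.app (T.obj A))
  have n3 : T.map (G.map (T.μ.app A)) ≫ w.ψ.app (T.obj A) =
      w.ψ.app (T.obj (T.obj A)) ≫ G.map (T.map (T.μ.app A)) := w.ψ.naturality (T.μ.app A)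
  have h2 : G.map (T.map (T.μ.app A)) ≫ G.map (T.μ.app A) =
      G.map (T.μ.app (T.obj A)) ≫ G.map (T.μ.app A) := by
    rw [← Functor.map_comp, ← Functor.map_comp, Monad.assoc]
  have h1 : T.map (w.ψ.app (T.obj A)) ≫ w.ψ.app (T.obj (T.obj A)) ≫
      G.map (T.μ.app (T.obj A)) = T.μ.app (G.obj (T.obj A)) ≫ w.ψ.app (T.obj A) :=
    (w.w1 (T.obj A)).symm
  have h3 : T.η.app (T.obj (G.obj (T.obj A))) ≫ T.μ.app (G.obj (T.obj A)) = 𝟙 _ :=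
    T.left_unit _
  slice_lhs 3 4 => rw [n1]
  slice_lhs 2 3 => rw [n2]
  slice_lhs 4 5 => rw [n3]
  slice_lhs 5 6 => rw [h2]
  slice_lhs 3 5 => rw [h1]
  slice_lhs 2 3 => rw [h3]
  simp
end

section
/- Let (T, C, ψ) be a weak entwining structure on a category 𝒞. For every object A of 𝒞 define e*_A := ε_{T C A} ∘ ψ_{C A} ∘ T(δ_A) : T C A → T C A. Then e*_A is idempotent: e*_A ∘ e*_A = e*_A. (These are the components of the canonical idempotent 2-cell associated to the 1-cell (t,ψ) : c → c of Cmd^π, at cofree C-comodules.) -/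
open CategoryTheory

/-- The canonical endomorphism `e*_A := ε_{T C A} ∘ ψ_{C A} ∘ T(δ_A)` of `T C A` is
idempotent: `e*_A ∘ e*_A = e*_A`. -/
theorem weakEntwining_canonical_coidempotent {𝒞 : Type*} [Category 𝒞] (T : Monad 𝒞)
    (G : Comonad 𝒞) (w : WeakEntwining T G) (A : 𝒞) :
    (T.map (G.δ.app A) ≫ w.ψ.app (G.obj A) ≫ G.ε.app (T.obj (G.obj A))) ≫
        (T.map (G.δ.app A) ≫ w.ψ.app (G.obj A) ≫ G.ε.app (T.obj (G.obj A))) =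
      T.map (G.δ.app A) ≫ w.ψ.app (G.obj A) ≫ G.ε.app (T.obj (G.obj A)) := by
  have nε1 : G.ε.app (T.obj (G.obj A)) ≫ T.map (G.δ.app A) =
      G.map (T.map (G.δ.app A)) ≫ G.ε.app (T.obj (G.obj (G.obj A))) :=
    (G.ε.naturality (T.map (G.δ.app A))).symm
  have nψ : w.ψ.app (G.obj A) ≫ G.map (T.map (G.δ.app A)) =
      T.map (G.map (G.δ.app A)) ≫ w.ψ.app (G.obj (G.obj A)) :=
    (w.ψ.naturality (G.δ.app A)).symm
  have nε2 : G.ε.app (T.obj (G.obj (G.obj A))) ≫ w.ψ.app (G.obj A) =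
      G.map (w.ψ.app (G.obj A)) ≫ G.ε.app (G.obj (T.obj (G.obj A))) :=
    (G.ε.naturality (w.ψ.app (G.obj A))).symm
  have coas : T.map (G.δ.app A) ≫ T.map (G.map (G.δ.app A)) =
      T.map (G.δ.app A) ≫ T.map (G.δ.app (G.obj A)) := by
    rw [← T.map_comp, ← T.map_comp, Comonad.coassoc]
  calc (T.map (G.δ.app A) ≫ w.ψ.app (G.obj A) ≫ G.ε.app (T.obj (G.obj A))) ≫
        (T.map (G.δ.app A) ≫ w.ψ.app (G.obj A) ≫ G.ε.app (T.obj (G.obj A)))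
      = T.map (G.δ.app A) ≫ w.ψ.app (G.obj A) ≫
          (G.ε.app (T.obj (G.obj A)) ≫ T.map (G.δ.app A)) ≫
          w.ψ.app (G.obj A) ≫ G.ε.app (T.obj (G.obj A)) := by simp
    _ = T.map (G.δ.app A) ≫ (w.ψ.app (G.obj A) ≫ G.map (T.map (G.δ.app A))) ≫
          G.ε.app (T.obj (G.obj (G.obj A))) ≫
          w.ψ.app (G.obj A) ≫ G.ε.app (T.obj (G.obj A)) := by rw [nε1]; simp
    _ = (T.map (G.δ.app A) ≫ T.map (G.map (G.δ.app A))) ≫ w.ψ.app (G.obj (G.obj A)) ≫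
          G.map (w.ψ.app (G.obj A)) ≫ G.ε.app (G.obj (T.obj (G.obj A))) ≫
          G.ε.app (T.obj (G.obj A)) := by rw [nψ]; simp only [Category.assoc]; rw [reassoc_of% nε2]
    _ = T.map (G.δ.app A) ≫ (T.map (G.δ.app (G.obj A)) ≫ w.ψ.app (G.obj (G.obj A)) ≫
          G.map (w.ψ.app (G.obj A))) ≫ G.ε.app (G.obj (T.obj (G.obj A))) ≫
          G.ε.app (T.obj (G.obj A)) := by rw [coas]; simp
    _ = T.map (G.δ.app A) ≫ (w.ψ.app (G.obj A) ≫ G.δ.app (T.obj (G.obj A))) ≫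
          G.ε.app (G.obj (T.obj (G.obj A))) ≫ G.ε.app (T.obj (G.obj A)) := by
        rw [← w.w2 (G.obj A)]
    _ = T.map (G.δ.app A) ≫ w.ψ.app (G.obj A) ≫ G.ε.app (T.obj (G.obj A)) := by
        simp
end

section
/- Let (T, μ, η) be a monad on a category 𝒞, (T', μ', η') a monad on a category 𝒟, V : 𝒞 → 𝒟 a functor, and ψ : T' ∘ V ⟶ V ∘ T a natural transformation (components ψ_A : T'(V A) → V(T A)) satisfying V(μ_A) ∘ ψ_{T A} ∘ T'(ψ_A) = ψ_A ∘ μ'_{V A} for every object A of 𝒞 (i.e. (V, ψ) is a 1-cell in the 2-category Mnd^ι). Then for every T-algebra (A, a : T A → A) the endomorphism V(a) ∘ ψ_A ∘ η'_{V A} of V A is idempotent. -/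
open CategoryTheory

/-- Let `(V, ψ)` be a 1-cell `T ⟶ T'` in the extended 2-category `Mnd^ι` of monads: a
functor `V : 𝒞 ⥤ 𝒟` together with a natural transformation `ψ : T' ∘ V ⟶ V ∘ T`
compatible with the multiplications (but not necessarily with the units). Then for every
`T`-algebra `(A, a)` the endomorphism `V(a) ∘ ψ_A ∘ η'_{V A}` of `V A` is idempotent. -/
theorem mndIota_one_cell_idempotent {𝒞 : Type*} [Category 𝒞] {𝒟 : Type*} [Category 𝒟]
    (T : Monad 𝒞) (T' : Monad 𝒟) (V : 𝒞 ⥤ 𝒟)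
    (ψ : (V ⋙ T'.toFunctor : 𝒞 ⥤ 𝒟) ⟶ (T.toFunctor ⋙ V : 𝒞 ⥤ 𝒟))
    (hψ : ∀ A : 𝒞, T'.μ.app (V.obj A) ≫ ψ.app A =
      T'.map (ψ.app A) ≫ ψ.app (T.obj A) ≫ V.map (T.μ.app A))
    (A : 𝒞) (a : T.obj A ⟶ A)
    (h_unit : T.η.app A ≫ a = 𝟙 A) (h_assoc : T.map a ≫ a = T.μ.app A ≫ a) :
    (T'.η.app (V.obj A) ≫ ψ.app A ≫ V.map a) ≫ (T'.η.app (V.obj A) ≫ ψ.app A ≫ V.map a) =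
      T'.η.app (V.obj A) ≫ ψ.app A ≫ V.map a := by
  have hη : ∀ {X Y : 𝒟} (f : X ⟶ Y), f ≫ T'.η.app Y = T'.η.app X ≫ T'.map f := by
    intro X Y f; simpa using T'.η.naturality f
  have hnat : T'.map (V.map a) ≫ ψ.app A = ψ.app (T.obj A) ≫ V.map (T.map a) := by
    simpa using ψ.naturality a
  simp only [Category.assoc]
  slice_lhs 3 4 => rw [hη (V.map a)]
  slice_lhs 4 5 => rw [hnat]
  slice_lhs 5 6 => rw [← V.map_comp, h_assoc, V.map_comp]
  have hη2 : ψ.app A ≫ T'.η.app (V.obj (T.obj A)) =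
      T'.η.app (T'.obj (V.obj A)) ≫ T'.map (ψ.app A) := hη (ψ.app A)
  slice_lhs 2 3 => rw [hη2]
  slice_lhs 3 5 => rw [← hψ A]
  slice_lhs 2 3 => rw [T'.left_unit]
  simp
end

section
/- Let (C, δ, ε) be a comonad on a category 𝒞, (C', δ', ε') a comonad on a category 𝒟, V : 𝒞 → 𝒟 a functor, and φ : V ∘ C ⟶ C' ∘ V a natural transformation (components φ_A : V(C A) → C'(V A)) satisfying C'(φ_A) ∘ φ_{C A} ∘ V(δ_A) = δ'_{V A} ∘ φ_A for every object A of 𝒞 (i.e. (V, φ) is a 1-cell in the 2-category Cmd^π). Then for every C-comodule (A, k : A → C A) the endomorphism ε'_{V A} ∘ φ_A ∘ V(k) of V A is idempotent. -/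
open CategoryTheory

/-- Let `(V, φ)` be a 1-cell `C ⟶ C'` in the extended 2-category `Cmd^π` of comonads: a
functor `V : 𝒞 ⥤ 𝒟` together with a natural transformation `φ : V ∘ C ⟶ C' ∘ V`
compatible with the comultiplications (but not necessarily with the counits). Then for
every `C`-comodule `(A, k)` the endomorphism `ε'_{V A} ∘ φ_A ∘ V(k)` of `V A` is
idempotent. -/
theorem cmdPi_one_cell_idempotent {𝒞 : Type*} [Category 𝒞] {𝒟 : Type*} [Category 𝒟]
    (G : Comonad 𝒞) (G' : Comonad 𝒟) (V : 𝒞 ⥤ 𝒟)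
    (φ : (G.toFunctor ⋙ V : 𝒞 ⥤ 𝒟) ⟶ (V ⋙ G'.toFunctor : 𝒞 ⥤ 𝒟))
    (hφ : ∀ A : 𝒞, V.map (G.δ.app A) ≫ φ.app (G.obj A) ≫ G'.map (φ.app A) =
      φ.app A ≫ G'.δ.app (V.obj A))
    (A : 𝒞) (k : A ⟶ G.obj A)
    (h_counit : k ≫ G.ε.app A = 𝟙 A) (h_coassoc : k ≫ G.map k = k ≫ G.δ.app A) :
    (V.map k ≫ φ.app A ≫ G'.ε.app (V.obj A)) ≫ (V.map k ≫ φ.app A ≫ G'.ε.app (V.obj A)) =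
      V.map k ≫ φ.app A ≫ G'.ε.app (V.obj A) := by
  have nat1 : G'.ε.app (V.obj A) ≫ V.map k = G'.map (V.map k) ≫ G'.ε.app (V.obj (G.obj A)) :=
    (G'.ε.naturality (V.map k)).symm
  have nat2 : G'.ε.app (V.obj (G.obj A)) ≫ φ.app A =
      G'.map (φ.app A) ≫ G'.ε.app (G'.obj (V.obj A)) := (G'.ε.naturality (φ.app A)).symm
  have natφ : V.map (G.map k) ≫ φ.app (G.obj A) = φ.app A ≫ G'.map (V.map k) := φ.naturality k
  calc (V.map k ≫ φ.app A ≫ G'.ε.app (V.obj A)) ≫ V.map k ≫ φ.app A ≫ G'.ε.app (V.obj A)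
      = V.map k ≫ (φ.app A ≫ G'.map (V.map k)) ≫ G'.ε.app (V.obj (G.obj A)) ≫ φ.app A ≫
          G'.ε.app (V.obj A) := by
        simp only [Category.assoc]; rw [reassoc_of% nat1]
    _ = V.map k ≫ V.map (G.map k) ≫ φ.app (G.obj A) ≫ G'.map (φ.app A) ≫
          G'.ε.app (G'.obj (V.obj A)) ≫ G'.ε.app (V.obj A) := by
        simp only [Category.assoc]; rw [← reassoc_of% natφ, reassoc_of% nat2]
    _ = V.map k ≫ V.map (G.δ.app A) ≫ φ.app (G.obj A) ≫ G'.map (φ.app A) ≫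
          G'.ε.app (G'.obj (V.obj A)) ≫ G'.ε.app (V.obj A) := by
        rw [← V.map_comp_assoc, h_coassoc, V.map_comp_assoc]
    _ = V.map k ≫ (φ.app A ≫ G'.δ.app (V.obj A)) ≫ G'.ε.app (G'.obj (V.obj A)) ≫
          G'.ε.app (V.obj A) := by
        simp only [Category.assoc]; rw [← reassoc_of% (hφ A)]
    _ = V.map k ≫ φ.app A ≫ G'.ε.app (V.obj A) := by simp
end

section
/- Let (T, C, ψ) be a weak entwining structure on a category 𝒞, let (A, a : T A → A) be a T-algebra and κ : A → C A a morphism satisfying the entwined-module compatibility C(a) ∘ ψ_A ∘ T(κ) = κ ∘ a. Then C C(a) ∘ C(ψ_A) ∘ ψ_{C A} ∘ η_{C C A} ∘ δ_A ∘ κ = δ_A ∘ κ as morphisms A → C C A. (This is the identity used to prove that coassociativity of the coaction transfers along the canonical idempotent splitting.) -/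
open CategoryTheory

/-- If `(A, a)` is a `T`-algebra and `κ : A ⟶ C A` satisfies the entwined-module
compatibility `C(a) ∘ ψ_A ∘ T(κ) = κ ∘ a`, then
`C C(a) ∘ C(ψ_A) ∘ ψ_{C A} ∘ η_{C C A} ∘ δ_A ∘ κ = δ_A ∘ κ` as morphisms `A ⟶ C C A`. -/
theorem weakEntwining_coassoc_transfer {𝒞 : Type*} [Category 𝒞] (T : Monad 𝒞)
    (G : Comonad 𝒞) (w : WeakEntwining T G) (A : 𝒞) (a : T.obj A ⟶ A)
    (h_unit : T.η.app A ≫ a = 𝟙 A) (h_assoc : T.map a ≫ a = T.μ.app A ≫ a)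
    (κ : A ⟶ G.obj A) (h_compat : T.map κ ≫ w.ψ.app A ≫ G.map a = a ≫ κ) :
    κ ≫ G.δ.app A ≫ T.η.app (G.obj (G.obj A)) ≫ w.ψ.app (G.obj A) ≫
        G.map (w.ψ.app A) ≫ G.map (G.map a) =
      κ ≫ G.δ.app A := by
  have nη : G.δ.app A ≫ T.η.app (G.obj (G.obj A)) =
      T.η.app (G.obj A) ≫ T.map (G.δ.app A) := by
    simpa using T.η.naturality (G.δ.app A)
  have nη2 : κ ≫ T.η.app (G.obj A) = T.η.app A ≫ T.map κ := by
    simpa using T.η.naturality κ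
  have nδ : G.δ.app (T.obj A) ≫ G.map (G.map a) = G.map a ≫ G.δ.app A := by
    simp [(G.δ.naturality a).symm]
  calc κ ≫ G.δ.app A ≫ T.η.app (G.obj (G.obj A)) ≫ w.ψ.app (G.obj A) ≫
        G.map (w.ψ.app A) ≫ G.map (G.map a)
      = κ ≫ T.η.app (G.obj A) ≫ (T.map (G.δ.app A) ≫ w.ψ.app (G.obj A) ≫
          G.map (w.ψ.app A)) ≫ G.map (G.map a) := by
        rw [← Category.assoc (G.δ.app A), nη]; simp
    _ = κ ≫ T.η.app (G.obj A) ≫ w.ψ.app A ≫ G.δ.app (T.obj A) ≫ G.map (G.map a) := by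
        rw [← w.w2 A]; simp
    _ = ((T.η.app A ≫ T.map κ) ≫ w.ψ.app A ≫ G.map a) ≫ G.δ.app A := by
        rw [← Category.assoc κ, nη2, nδ]; simp
    _ = κ ≫ G.δ.app A := by
        slice_lhs 2 4 => rw [h_compat]
        slice_lhs 1 2 => rw [h_unit]
        simp
end

section
/- Let (T, C, ψ) be a weak entwining structure on a category 𝒞, let (A, a) and (A', a') be T-algebras, let κ : A → C A satisfy the entwined-module compatibility C(a) ∘ ψ_A ∘ T(κ) = κ ∘ a, and let f : A → A' be a morphism of T-algebras (i.e. a' ∘ T(f) = f ∘ a). Then C(a') ∘ ψ_{A'} ∘ η_{C A'} ∘ C(f) ∘ κ = C(f) ∘ κ as morphisms A → C A'. (This is the identity used to prove that morphisms of weak entwined modules correspond to comodule morphisms over the weakly lifted comonad.) -/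
open CategoryTheory

/-- If `(A, a)` and `(A', a')` are `T`-algebras, `κ : A ⟶ C A` satisfies the
entwined-module compatibility `C(a) ∘ ψ_A ∘ T(κ) = κ ∘ a`, and `f : A ⟶ A'` is a morphism
of `T`-algebras, then `C(a') ∘ ψ_{A'} ∘ η_{C A'} ∘ C(f) ∘ κ = C(f) ∘ κ` as morphisms
`A ⟶ C A'`. -/
theorem weakEntwining_morphism_through_idempotent {𝒞 : Type*} [Category 𝒞] (T : Monad 𝒞)
    (G : Comonad 𝒞) (w : WeakEntwining T G) (A A' : 𝒞) (a : T.obj A ⟶ A)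
    (h_unit : T.η.app A ≫ a = 𝟙 A) (h_assoc : T.map a ≫ a = T.μ.app A ≫ a)
    (a' : T.obj A' ⟶ A')
    (h_unit' : T.η.app A' ≫ a' = 𝟙 A') (h_assoc' : T.map a' ≫ a' = T.μ.app A' ≫ a')
    (κ : A ⟶ G.obj A) (h_compat : T.map κ ≫ w.ψ.app A ≫ G.map a = a ≫ κ)
    (f : A ⟶ A') (hf : T.map f ≫ a' = a ≫ f) :
    κ ≫ G.map f ≫ T.η.app (G.obj A') ≫ w.ψ.app A' ≫ G.map a' = κ ≫ G.map f := by
  have h1 : κ ≫ T.η.app (G.obj A) ≫ w.ψ.app A ≫ G.map a = κ := by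
    have hn : κ ≫ T.η.app (G.obj A) = T.η.app A ≫ T.map κ := by simpa using T.η.naturality κ
    rw [reassoc_of% hn, h_compat, reassoc_of% h_unit]
  have hψ : T.map (G.map f) ≫ w.ψ.app A' = w.ψ.app A ≫ G.map (T.map f) := w.ψ.naturality f
  have hη : G.map f ≫ T.η.app (G.obj A') = T.η.app (G.obj A) ≫ T.map (G.map f) :=
    by simpa using T.η.naturality (G.map f)
  rw [reassoc_of% hη, reassoc_of% hψ, ← G.map_comp, hf, G.map_comp, reassoc_of% h1]
end
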